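/- The interior of \nabla_\infty relative to the subspace topology on \overline\nabla_\infty is empty; consequently (since \nabla_\infty is dense in \overline\nabla_\infty), the boundary of \nabla_\infty relative to \overline\nabla_\infty is all of \overline\nabla_\infty. -/

import Mathlib

/-- The Kingman simplex: nonincreasing nonnegative sequences with sum at most 1. -/
def KingmanSimplex : Set (ℕ → ℝ) :=
  {x | (∀ i, x (i + 1) ≤ x i) ∧ (∀ i, 0 ≤ x i) ∧ Summable x ∧ ∑' i, x i ≤ 1}

/-- `∇_∞` viewed as a subset of the Kingman simplex (with its subspace topology). -/
def nablaInftySub : Set KingmanSimplex :=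
  {x | ∑' i, (x : ℕ → ℝ) i = 1}

lemma kingman_interior_empty : interior nablaInftySub = ∅ := by
  rw [Set.eq_empty_iff_forall_notMem]
  intro x hx
  have hx1' : x ∈ nablaInftySub := interior_subset hx
  have hx1 : ∑' i, (x : ℕ → ℝ) i = 1 := hx1'
  obtain ⟨hmono, hnn, hsum, hle⟩ := x.2
  have hc : ∀ n : ℕ, (0:ℝ) < 1/(n+1) := by
    intro n; positivity
  have hc1 : ∀ n : ℕ, 0 ≤ 1 - 1/((n:ℝ)+1) := by
    intro n
    have : (1:ℝ)/(n+1) ≤ 1 := by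
      rw [div_le_one (by positivity)]; linarith [Nat.cast_nonneg (α := ℝ) n]
    linarith
  have hmem : ∀ n : ℕ, (fun i => (1 - 1/((n:ℝ)+1)) * (x : ℕ → ℝ) i) ∈ KingmanSimplex := by
    intro n
    refine ⟨fun i => mul_le_mul_of_nonneg_left (hmono i) (hc1 n),
      fun i => mul_nonneg (hc1 n) (hnn i), hsum.mul_left _, ?_⟩
    rw [tsum_mul_left, hx1, mul_one]
    linarith [hc n]
  set u : ℕ → KingmanSimplex := fun n => ⟨_, hmem n⟩ with hu
  have htend : Filter.Tendsto u Filter.atTop (nhds x) := by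
    rw [tendsto_subtype_rng, tendsto_pi_nhds]
    intro i
    have h0 : Filter.Tendsto (fun n : ℕ => 1/((n:ℝ)+1)) Filter.atTop (nhds 0) :=
      tendsto_one_div_add_atTop_nhds_zero_nat
    have h1 : Filter.Tendsto (fun n : ℕ => (1 - 1/((n:ℝ)+1)) * (x : ℕ → ℝ) i)
        Filter.atTop (nhds ((1 - 0) * (x : ℕ → ℝ) i)) :=
      (Filter.Tendsto.sub tendsto_const_nhds h0).mul_const _
    simpa [hu] using h1
  have hev : ∀ᶠ n in Filter.atTop, u n ∈ nablaInftySub :=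
    (htend.eventually_mem (isOpen_interior.mem_nhds hx)).mono fun n hn => interior_subset hn
  obtain ⟨n, hn⟩ := hev.exists
  have : (1 - 1/((n:ℝ)+1)) * ∑' i, (x : ℕ → ℝ) i = 1 := by
    rw [← tsum_mul_left]; exact hn
  rw [hx1, mul_one] at this
  linarith [hc n]

lemma kingman_closure_univ : closure nablaInftySub = Set.univ := by
  rw [Set.eq_univ_iff_forall]
  intro x
  obtain ⟨hmono, hnn, hsum, hle⟩ := x.2
  set s := ∑' i, (x : ℕ → ℝ) i with hs
  have hc : ∀ n : ℕ, 0 ≤ (1-s)/((n:ℝ)+1) := fun n => div_nonneg (by linarith) (by positivity)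
  have hfsum : ∀ n : ℕ, Summable (fun i => if i < n+1 then (1-s)/((n:ℝ)+1) else 0) := by
    intro n
    apply summable_of_ne_finset_zero (s := Finset.range (n+1))
    intro i hi
    simp only [Finset.mem_range] at hi
    simp [hi]
  have hftsum : ∀ n : ℕ, ∑' i, (if i < n+1 then (1-s)/((n:ℝ)+1) else 0) = 1 - s := by
    intro n
    rw [tsum_eq_sum (s := Finset.range (n+1)) (by intro i hi; simp only [Finset.mem_range] at hi; simp [hi])]
    have : ∑ i ∈ Finset.range (n+1), (if i < n+1 then (1-s)/((n:ℝ)+1) else 0)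
        = ∑ i ∈ Finset.range (n+1), (1-s)/((n:ℝ)+1) :=
      Finset.sum_congr rfl (fun i hi => by simp [Finset.mem_range.mp hi])
    rw [this, Finset.sum_const, Finset.card_range, nsmul_eq_mul]
    have hne : ((n:ℝ)+1) ≠ 0 := by positivity
    push_cast
    field_simp
  have hmem : ∀ n : ℕ, (fun i => (x : ℕ → ℝ) i + if i < n+1 then (1-s)/((n:ℝ)+1) else 0)
      ∈ KingmanSimplex := by
    intro n
    refine ⟨?_, fun i => add_nonneg (hnn i) (by split <;> [exact hc n; exact le_refl 0]),
      hsum.add (hfsum n), ?_⟩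
    · intro i
      have := hmono i
      by_cases h1 : i + 1 < n + 1
      · have h2 : i < n + 1 := by omega
        simp only [h1, h2, if_true]
        linarith
      · by_cases h2 : i < n + 1 <;> simp only [h1, h2, if_true, if_false] <;>
          [linarith [hc n]; linarith]
    · rw [Summable.tsum_add hsum (hfsum n), ← hs, hftsum n]
      linarith
  set u : ℕ → KingmanSimplex := fun n => ⟨_, hmem n⟩ with hu
  have hnab : ∀ n, u n ∈ nablaInftySub := by
    intro n
    show ∑' i, ((x : ℕ → ℝ) i + if i < n+1 then (1-s)/((n:ℝ)+1) else 0) = 1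
    rw [Summable.tsum_add hsum (hfsum n), ← hs, hftsum n]
    ring
  have htend : Filter.Tendsto u Filter.atTop (nhds x) := by
    rw [tendsto_subtype_rng, tendsto_pi_nhds]
    intro i
    have h0 : Filter.Tendsto (fun n : ℕ => (1-s)/((n:ℝ)+1)) Filter.atTop (nhds 0) := by
      have := tendsto_one_div_add_atTop_nhds_zero_nat (𝕜 := ℝ)
      have h := this.const_mul (1-s)
      simpa [div_eq_mul_inv, mul_comm, mul_assoc, one_div] using h
    have key : Filter.Tendsto (fun n : ℕ => (x : ℕ → ℝ) i + (1-s)/((n:ℝ)+1))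
        Filter.atTop (nhds ((x : ℕ → ℝ) i)) := by
      simpa using (tendsto_const_nhds.add h0)
    refine key.congr' ?_
    filter_upwards [Filter.eventually_ge_atTop i] with n hn
    have : i < n + 1 := by omega
    simp [hu, this]
    intro h
    omega
  exact mem_closure_of_tendsto htend (Filter.Eventually.of_forall hnab)

/-- The interior of `∇_∞` relative to the subspace topology on `\overline∇_∞` is empty;
consequently the boundary of `∇_∞` relative to `\overline∇_∞` is all of `\overline∇_∞`. -/
theorem interior_nablaInfty_eq_empty_and_frontier_eq_univ :
    interior nablaInftySub = ∅ ∧ frontier nablaInftySub = Set.univ := by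
  refine ⟨kingman_interior_empty, ?_⟩
  rw [frontier, kingman_interior_empty, kingman_closure_univ, Set.diff_empty]
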